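/- arXiv:2404.06763 — 3 statements merged into one kernel-verified Lean document; each statement's English description precedes it below -/
import Mathlib

section
/- Let 𝕂 be a field. Suppose (A_n, d'_n), (B_n, d''_n), (C_n, d_n) are cochain complexes of 𝕂-vector spaces (with differentials d'_n : A_{n+1} → A_n, d''_n : B_{n+1} → B_n, d_n : C_{n+1} → C_n satisfying d'_{n-1} ∘ d'_n = 0, d''_{n-1} ∘ d''_n = 0, d_{n-1} ∘ d_n = 0 for all n ≥ 1) such that: (1) for every n ≥ 0, A_n and B_n are finite-dimensional; (2) the complex (B_n, d''_n) is exact, i.e. ker d''_{k-1} = im d''_k for all k ≥ 1; (3) C_n = A_n ⊕ B_n for every n; (4) d_n restricted to the summand B_{n+1} lands in B_n and coincides with d''_n, and the composite of the inclusion A_{n+1} → C_{n+1}, the map d_n, and the projection π_{1,n} : A_n ⊕ B_n → A_n equals d'_n. Then for every k ≥ 1, rank ker d_k = rank ker d'_k + rank ker d''_k. -/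
/-- Lemma 2.8(1) of the paper: given cochain complexes `(A, d')`, `(B, d'')`, `(C, d)`
with `C n = A n ⊕ B n` (modeled as `A n × B n`), `A n`, `B n` finite-dimensional,
`(B, d'')` exact, `d` restricted to `B` landing in `B` and equal to `d''`, and the
`A`-component of `d` restricted to `A` equal to `d'`, then for all `k ≥ 1`,
`rank ker d_k = rank ker d'_k + rank ker d''_k`. -/
theorem rank_ker_eq_add_of_exact_summand
    (𝕂 : Type*) [Field 𝕂]
    (A B : ℕ → Type*)
    [∀ n, AddCommGroup (A n)] [∀ n, Module 𝕂 (A n)]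
    [∀ n, AddCommGroup (B n)] [∀ n, Module 𝕂 (B n)]
    [∀ n, FiniteDimensional 𝕂 (A n)] [∀ n, FiniteDimensional 𝕂 (B n)]
    (d' : ∀ n, A (n + 1) →ₗ[𝕂] A n)
    (d'' : ∀ n, B (n + 1) →ₗ[𝕂] B n)
    (d : ∀ n, A (n + 1) × B (n + 1) →ₗ[𝕂] A n × B n)
    (hA : ∀ n, (d' n).comp (d' (n + 1)) = 0)
    (hB : ∀ n, (d'' n).comp (d'' (n + 1)) = 0)
    (hC : ∀ n, (d n).comp (d (n + 1)) = 0)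
    (hexact : ∀ n, LinearMap.ker (d'' n) = LinearMap.range (d'' (n + 1)))
    (hdB : ∀ n, (d n).comp (LinearMap.inr 𝕂 (A (n + 1)) (B (n + 1)))
        = (LinearMap.inr 𝕂 (A n) (B n)).comp (d'' n))
    (hdA : ∀ n, (LinearMap.fst 𝕂 (A n) (B n)).comp
        ((d n).comp (LinearMap.inl 𝕂 (A (n + 1)) (B (n + 1)))) = d' n) :
    ∀ k ≥ 1,
      Module.finrank 𝕂 (LinearMap.ker (d k))
        = Module.finrank 𝕂 (LinearMap.ker (d' k))
          + Module.finrank 𝕂 (LinearMap.ker (d'' k)) := by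
  intro k hk
  obtain ⟨m, rfl⟩ : ∃ m, k = m + 1 := ⟨k - 1, by omega⟩
  set n := m + 1 with hn
  -- pointwise versions of the hypotheses
  have hdB' : ∀ (p : ℕ) (b : B (p + 1)), d p (0, b) = (0, d'' p b) := by
    intro p b
    have := LinearMap.congr_fun (hdB p) b
    simpa using this
  have hdA' : ∀ (p : ℕ) (a : A (p + 1)), (d p (a, 0)).1 = d' p a := by
    intro p a
    have := LinearMap.congr_fun (hdA p) a
    simpa using this
  have hd : ∀ (p : ℕ) (a : A (p + 1)) (b : B (p + 1)),
      d p (a, b) = (d' p a, (d p (a, 0)).2 + d'' p b) := by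
    intro p a b
    have h1 : ((a, b) : A (p + 1) × B (p + 1)) = (a, 0) + (0, b) := by simp
    rw [h1, map_add, hdB' p b]
    exact Prod.ext (by simp [hdA' p a]) (by simp)
  -- the projection from ker (d n) to ker (d' n)
  have hmem : ∀ x : A (n + 1) × B (n + 1), x ∈ LinearMap.ker (d n) →
      x.1 ∈ LinearMap.ker (d' n) := by
    intro x hx
    rw [LinearMap.mem_ker] at hx ⊢
    have hx' : d n (x.1, x.2) = 0 := by rw [Prod.mk.eta]; exact hx
    rw [hd n x.1 x.2] at hx'
    exact (Prod.mk.injEq _ _ _ _ ▸ hx').1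
  let φ : LinearMap.ker (d n) →ₗ[𝕂] LinearMap.ker (d' n) :=
    LinearMap.codRestrict _
      ((LinearMap.fst 𝕂 _ _).comp (LinearMap.ker (d n)).subtype)
      (fun x => hmem x.1 x.2)
  -- φ is surjective
  have hsurj : Function.Surjective φ := by
    rintro ⟨a, ha⟩
    rw [LinearMap.mem_ker] at ha
    -- (d n (a,0)).2 lies in ker (d'' m)
    have hker : d'' m ((d n (a, 0)).2) = 0 := by
      have h0 : d m (d n (a, 0)) = 0 := LinearMap.congr_fun (hC m) (a, 0)
      have h1 : d n (a, 0) = (0, (d n (a, 0)).2) := by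
        rw [hd n a 0] at *
        simp [ha]
      rw [h1, hdB' m] at h0
      exact (Prod.mk.injEq _ _ _ _ ▸ h0).2
    obtain ⟨b, hb⟩ := (hexact m) ▸ LinearMap.mem_ker.mpr hker
    refine ⟨⟨(a, -b), ?_⟩, ?_⟩
    · rw [LinearMap.mem_ker, hd n a (-b)]
      simp [ha, hb]
      rw [← hb]; exact add_neg_cancel _
    · rfl
  -- ker φ is isomorphic to ker (d'' n)
  have hkerd'' : ∀ b : B (n + 1), b ∈ LinearMap.ker (d'' n) →
      ((0 : A (n + 1)), b) ∈ LinearMap.ker (d n) := by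
    intro b hb
    rw [LinearMap.mem_ker] at hb ⊢
    rw [hdB' n b, hb]
    simp
  let ψ : LinearMap.ker (d'' n) →ₗ[𝕂] LinearMap.ker φ :=
    { toFun := fun b => ⟨⟨((0 : A (n + 1)), b.1), hkerd'' b.1 b.2⟩, by
        rw [LinearMap.mem_ker]; exact Subtype.ext rfl⟩
      map_add' := by intro x y; ext <;> simp
      map_smul' := by intro c x; ext <;> simp }
  have hbij : Function.Bijective ψ := by
    constructor
    · intro x y hxy
      apply Subtype.ext
      have := congrArg (fun z => ((z : LinearMap.ker φ) : A (n + 1) × B (n + 1)).2) hxy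
      exact this
    · rintro ⟨⟨⟨a, b⟩, hab⟩, hker⟩
      rw [LinearMap.mem_ker] at hker
      have ha : a = 0 := congrArg Subtype.val hker
      subst ha
      have hb : b ∈ LinearMap.ker (d'' n) := by
        rw [LinearMap.mem_ker] at hab ⊢
        rw [hdB' n b] at hab
        exact (Prod.mk.injEq _ _ _ _ ▸ hab).2
      exact ⟨⟨b, hb⟩, rfl⟩
  -- rank-nullity
  have hrange : LinearMap.range φ = ⊤ := LinearMap.range_eq_top.mpr hsurj
  have h1 := LinearMap.finrank_range_add_finrank_ker φ
  rw [hrange, finrank_top] at h1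
  have h2 : Module.finrank 𝕂 (LinearMap.ker φ)
      = Module.finrank 𝕂 (LinearMap.ker (d'' n)) :=
    (LinearEquiv.ofBijective ψ hbij).symm.finrank_eq
  omega
end

section
/- Let 𝕂 be a field. Suppose (A_n, d'_n), (B_n, d''_n), (C_n, d_n) are cochain complexes of 𝕂-vector spaces (with differentials d'_n : A_{n+1} → A_n, d''_n : B_{n+1} → B_n, d_n : C_{n+1} → C_n satisfying d'_{n-1} ∘ d'_n = 0, d''_{n-1} ∘ d''_n = 0, d_{n-1} ∘ d_n = 0 for all n ≥ 1) such that: (1) for every n ≥ 0, A_n and B_n are finite-dimensional; (2) the complex (B_n, d''_n) is exact, i.e. ker d''_{k-1} = im d''_k for all k ≥ 1; (3) C_n = A_n ⊕ B_n for every n; (4) d_n restricted to the summand B_{n+1} lands in B_n and coincides with d''_n, and the composite of the inclusion A_{n+1} → C_{n+1}, the map d_n, and the projection π_{1,n} : A_n ⊕ B_n → A_n equals d'_n. Then for every k ≥ 1, rank im d_k = rank im d'_k + rank im d''_k. -/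
/-- Lemma 2.8(1) of the paper: given cochain complexes `(A, d')`, `(B, d'')`, `(C, d)`
with `C n = A n ⊕ B n` (modeled as `A n × B n`), `A n`, `B n` finite-dimensional,
`(B, d'')` exact, `d` restricted to `B` landing in `B` and equal to `d''`, and the
`A`-component of `d` restricted to `A` equal to `d'`, then for all `k ≥ 1`,
`rank im d_k = rank im d'_k + rank im d''_k`. -/
theorem rank_im_eq_add_of_exact_summand
    (𝕂 : Type*) [Field 𝕂]
    (A B : ℕ → Type*)
    [∀ n, AddCommGroup (A n)] [∀ n, Module 𝕂 (A n)]
    [∀ n, AddCommGroup (B n)] [∀ n, Module 𝕂 (B n)]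
    [∀ n, FiniteDimensional 𝕂 (A n)] [∀ n, FiniteDimensional 𝕂 (B n)]
    (d' : ∀ n, A (n + 1) →ₗ[𝕂] A n)
    (d'' : ∀ n, B (n + 1) →ₗ[𝕂] B n)
    (d : ∀ n, A (n + 1) × B (n + 1) →ₗ[𝕂] A n × B n)
    (hA : ∀ n, (d' n).comp (d' (n + 1)) = 0)
    (hB : ∀ n, (d'' n).comp (d'' (n + 1)) = 0)
    (hC : ∀ n, (d n).comp (d (n + 1)) = 0)
    (hexact : ∀ n, LinearMap.ker (d'' n) = LinearMap.range (d'' (n + 1)))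
    (hdB : ∀ n, (d n).comp (LinearMap.inr 𝕂 (A (n + 1)) (B (n + 1)))
        = (LinearMap.inr 𝕂 (A n) (B n)).comp (d'' n))
    (hdA : ∀ n, (LinearMap.fst 𝕂 (A n) (B n)).comp
        ((d n).comp (LinearMap.inl 𝕂 (A (n + 1)) (B (n + 1)))) = d' n) :
    ∀ k ≥ 1,
      Module.finrank 𝕂 (LinearMap.range (d k))
        = Module.finrank 𝕂 (LinearMap.range (d' k))
          + Module.finrank 𝕂 (LinearMap.range (d'' k)) := by

  intro k hk
  obtain ⟨m, rfl⟩ : ∃ m, k = m + 1 := ⟨k - 1, by omega⟩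
  have hA1 : ∀ a : A (m + 2), (d (m + 1) (a, 0)).1 = d' (m + 1) a := fun a =>
    LinearMap.congr_fun (hdA (m + 1)) a
  have hB1 : ∀ n, ∀ b : B (n + 1), d n (0, b) = (0, d'' n b) := fun n b =>
    LinearMap.congr_fun (hdB n) b
  have hsplit : ∀ (a : A (m + 2)) (b : B (m + 2)),
      d (m + 1) (a, b) = d (m + 1) (a, 0) + (0, d'' (m + 1) b) := by
    intro a b
    rw [← hB1 (m + 1) b, ← map_add]
    simp
  have hfst : ∀ (a : A (m + 2)) (b : B (m + 2)),
      (d (m + 1) (a, b)).1 = d' (m + 1) a := by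
    intro a b
    rw [hsplit a b]
    simp [hA1 a]
  have key : ∀ a : A (m + 2), d' (m + 1) a = 0 →
      (d (m + 1) (a, 0)).2 ∈ LinearMap.range (d'' (m + 1)) := by
    intro a ha
    rw [← hexact m, LinearMap.mem_ker]
    have h2 : d m (d (m + 1) (a, 0)) = 0 := LinearMap.congr_fun (hC m) (a, 0)
    have h1 : d (m + 1) (a, 0) = (0, (d (m + 1) (a, 0)).2) := by
      refine Prod.ext ?_ rfl
      rw [hA1 a, ha]
    rw [h1, hB1 m] at h2
    exact (Prod.ext_iff.mp h2).2
  set R := LinearMap.range (d (m + 1)) with hR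
  let φ : R →ₗ[𝕂] A (m + 1) :=
    (LinearMap.fst 𝕂 (A (m + 1)) (B (m + 1))).comp R.subtype
  have hφrange : LinearMap.range φ = LinearMap.range (d' (m + 1)) := by
    apply le_antisymm
    · rintro x ⟨⟨y, hy⟩, rfl⟩
      obtain ⟨⟨a, b⟩, rfl⟩ := hy
      exact ⟨a, (hfst a b).symm⟩
    · rintro x ⟨a, rfl⟩
      exact ⟨⟨d (m + 1) (a, 0), ⟨(a, 0), rfl⟩⟩, hA1 a⟩
  let ξ : LinearMap.ker φ →ₗ[𝕂] B (m + 1) :=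
    (LinearMap.snd 𝕂 (A (m + 1)) (B (m + 1))).comp
      (R.subtype.comp (LinearMap.ker φ).subtype)
  have hξinj : Function.Injective ξ := by
    intro x y hxy
    have hx : ((x.1 : A (m + 1) × B (m + 1))).1 = 0 := LinearMap.mem_ker.mp x.2
    have hy : ((y.1 : A (m + 1) × B (m + 1))).1 = 0 := LinearMap.mem_ker.mp y.2
    have h3 : (x.1 : A (m + 1) × B (m + 1)) = (y.1 : A (m + 1) × B (m + 1)) :=
      Prod.ext (hx.trans hy.symm) hxy
    exact Subtype.ext (Subtype.ext h3)
  have hξrange : LinearMap.range ξ = LinearMap.range (d'' (m + 1)) := by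
    apply le_antisymm
    · rintro x ⟨⟨⟨y, hy⟩, hker⟩, rfl⟩
      obtain ⟨⟨a, b⟩, rfl⟩ := hy
      have ha : d' (m + 1) a = 0 := by
        rw [← hfst a b]
        exact LinearMap.mem_ker.mp hker
      obtain ⟨c, hc⟩ := key a ha
      refine ⟨c + b, ?_⟩
      have hsnd : (d (m + 1) (a, b)).2 = (d (m + 1) (a, 0)).2 + d'' (m + 1) b := by
        rw [hsplit a b]
        simp
      rw [map_add, hc]
      exact hsnd.symm
    · rintro x ⟨b, rfl⟩
      exact ⟨⟨⟨(0, d'' (m + 1) b), ⟨(0, b), hB1 (m + 1) b⟩⟩,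
        LinearMap.mem_ker.mpr rfl⟩, rfl⟩
  have h1 := LinearMap.finrank_range_add_finrank_ker φ
  have h2 := LinearMap.finrank_range_of_inj hξinj
  rw [hφrange] at h1
  rw [hξrange] at h2
  rw [← h1, h2]
end

section
/- Let 𝕂 be a field. Suppose (A_n, d'_n), (B_n, d''_n), (C_n, d_n) are cochain complexes of 𝕂-vector spaces (with differentials d'_n : A_{n+1} → A_n, d''_n : B_{n+1} → B_n, d_n : C_{n+1} → C_n satisfying d'_{n-1} ∘ d'_n = 0, d''_{n-1} ∘ d''_n = 0, d_{n-1} ∘ d_n = 0 for all n ≥ 1), with A_n and B_n NOT assumed finite-dimensional, such that: (1) the complex (B_n, d''_n) is exact, i.e. ker d''_{k-1} = im d''_k for all k ≥ 1; (2) C_n = A_n ⊕ B_n for every n; (3) d_n restricted to the summand B_{n+1} lands in B_n and coincides with d''_n, and the composite of the inclusion A_{n+1} → C_{n+1}, the map d_n, and the projection π_{1,n} : A_n ⊕ B_n → A_n equals d'_n. Then for every k ≥ 1, the dimension (as a cardinal) of ker d_k equals the sum of the dimensions of ker d'_k and ker d''_k, and the dimension of im d_k equals the sum of the dimensions of im d'_k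 and im d''_k. -/
universe u
universe v


private lemma rank_eq_of_bijective_aux {𝕂 : Type*} {V W : Type v} [Field 𝕂]
    [AddCommGroup V] [Module 𝕂 V] [AddCommGroup W] [Module 𝕂 W]
    (p : Submodule 𝕂 V) (q : Submodule 𝕂 W) (f : p →ₗ[𝕂] q)
    (h : Function.Bijective f) : Module.rank 𝕂 p = Module.rank 𝕂 q :=
  (LinearEquiv.ofBijective f h).rank_eq

/-- The remark after Lemma 2.8 of the paper: the conclusion of Lemma 2.8 holds without
the finite-dimensionality assumption, with dimensions understood as cardinals
(`Module.rank`) and the sums being cardinal addition. -/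
theorem rank_ker_im_eq_add_of_exact_summand_infinite
    (𝕂 : Type*) [Field 𝕂]
    (A B : ℕ → Type u)
    [∀ n, AddCommGroup (A n)] [∀ n, Module 𝕂 (A n)]
    [∀ n, AddCommGroup (B n)] [∀ n, Module 𝕂 (B n)]
    (d' : ∀ n, A (n + 1) →ₗ[𝕂] A n)
    (d'' : ∀ n, B (n + 1) →ₗ[𝕂] B n)
    (d : ∀ n, A (n + 1) × B (n + 1) →ₗ[𝕂] A n × B n)
    (hA : ∀ n, (d' n).comp (d' (n + 1)) = 0)
    (hB : ∀ n, (d'' n).comp (d'' (n + 1)) = 0)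
    (hC : ∀ n, (d n).comp (d (n + 1)) = 0)
    (hexact : ∀ n, LinearMap.ker (d'' n) = LinearMap.range (d'' (n + 1)))
    (hdB : ∀ n, (d n).comp (LinearMap.inr 𝕂 (A (n + 1)) (B (n + 1)))
        = (LinearMap.inr 𝕂 (A n) (B n)).comp (d'' n))
    (hdA : ∀ n, (LinearMap.fst 𝕂 (A n) (B n)).comp
        ((d n).comp (LinearMap.inl 𝕂 (A (n + 1)) (B (n + 1)))) = d' n) :
    ∀ k ≥ 1,
      Module.rank 𝕂 (LinearMap.ker (d k))
        = Module.rank 𝕂 (LinearMap.ker (d' k)) + Module.rank 𝕂 (LinearMap.ker (d'' k))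
      ∧ Module.rank 𝕂 (LinearMap.range (d k))
        = Module.rank 𝕂 (LinearMap.range (d' k))
          + Module.rank 𝕂 (LinearMap.range (d'' k)) := by
  intro k hk
  obtain ⟨m, rfl⟩ : ∃ m, k = m + 1 := ⟨k - 1, (Nat.succ_pred_eq_of_pos hk).symm⟩
  have hdB' : ∀ n (y : B (n + 1)), d n (0, y) = (0, d'' n y) := fun n y =>
    LinearMap.congr_fun (hdB n) y
  have hdA' : ∀ n (x : A (n + 1)), (d n (x, 0)).1 = d' n x := fun n x =>
    LinearMap.congr_fun (hdA n) x
  set f : A (m + 2) →ₗ[𝕂] B (m + 1) :=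
    (LinearMap.snd 𝕂 (A (m + 1)) (B (m + 1))).comp
      ((d (m + 1)).comp (LinearMap.inl 𝕂 (A (m + 2)) (B (m + 2)))) with hfdef
  have hd1 : ∀ (a : A (m + 2)) (b : B (m + 2)),
      d (m + 1) (a, b) = (d' (m + 1) a, f a + d'' (m + 1) b) := by
    intro a b
    have hsplit : (a, b) = ((a, (0 : B (m + 2))) + ((0 : A (m + 2)), b)) := by simp
    have h1 : d (m + 1) (a, (0 : B (m + 2))) = (d' (m + 1) a, f a) := by
      ext
      · exact hdA' (m + 1) a
      · rfl
    rw [hsplit, map_add, hdB' (m + 1) b, h1]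
    simp [Prod.ext_iff]
  have hker : ∀ a : A (m + 2), d' (m + 1) a = 0 → f a ∈ LinearMap.range (d'' (m + 1)) := by
    intro a ha
    rw [← hexact m, LinearMap.mem_ker]
    have h0 := LinearMap.congr_fun (hC m) (a, (0 : B (m + 2)))
    rw [LinearMap.comp_apply] at h0
    rw [show d (m + 1) (a, (0 : B (m + 2))) = ((0 : A (m + 1)), f a) by
      rw [hd1]; simp [ha]] at h0
    rw [hdB' m (f a)] at h0
    simpa using congrArg Prod.snd h0
  constructor
  · -- kernels
    let g : LinearMap.ker (d (m + 1)) →ₗ[𝕂] LinearMap.ker (d' (m + 1)) :=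
      LinearMap.codRestrict _
        ((LinearMap.fst 𝕂 (A (m + 2)) (B (m + 2))).comp (LinearMap.ker (d (m + 1))).subtype)
        (by
          rintro ⟨⟨a, b⟩, hab⟩
          rw [LinearMap.mem_ker] at hab
          rw [hd1] at hab
          simpa using congrArg Prod.fst hab)
    have hgsurj : Function.Surjective g := by
      rintro ⟨a, ha⟩
      rw [LinearMap.mem_ker] at ha
      obtain ⟨b, hb⟩ := hker a ha
      refine ⟨⟨(a, -b), ?_⟩, rfl⟩
      rw [LinearMap.mem_ker, hd1, ha, map_neg, hb]
      simp
    -- ker g ≃ ker d''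
    let e : LinearMap.ker (d'' (m + 1)) →ₗ[𝕂] LinearMap.ker g :=
      LinearMap.codRestrict _
        (LinearMap.codRestrict _
          ((LinearMap.inr 𝕂 (A (m + 2)) (B (m + 2))).comp (LinearMap.ker (d'' (m + 1))).subtype)
          (by
            rintro ⟨b, hb⟩
            rw [LinearMap.mem_ker] at hb ⊢
            simp only [LinearMap.comp_apply, LinearMap.coe_inr, Submodule.coe_subtype]
            rw [hdB' (m + 1) b, hb]
            rfl))
        (by
          rintro ⟨b, hb⟩
          exact Subtype.ext rfl)
    have hebij : Function.Bijective e := by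
      constructor
      · rintro ⟨b, hb⟩ ⟨b', hb'⟩ hee
        have := congrArg (fun x => (x.1.1 : A (m + 2) × B (m + 2)).2) hee
        exact Subtype.ext this
      · rintro ⟨⟨⟨a, b⟩, hab⟩, hx⟩
        have ha : a = 0 := congrArg Subtype.val (LinearMap.mem_ker.mp hx)
        subst ha
        have hb : b ∈ LinearMap.ker (d'' (m + 1)) := by
          rw [LinearMap.mem_ker] at hab ⊢
          rw [hd1] at hab
          have := congrArg Prod.snd hab
          simpa using this
        exact ⟨⟨b, hb⟩, by apply Subtype.ext; apply Subtype.ext; rfl⟩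
    have hrk := rank_eq_of_bijective_aux _ _ e hebij
    rw [LinearMap.rank_eq_of_surjective hgsurj, ← hrk]
  · -- ranges
    let g : LinearMap.range (d (m + 1)) →ₗ[𝕂] LinearMap.range (d' (m + 1)) :=
      LinearMap.codRestrict _
        ((LinearMap.fst 𝕂 (A (m + 1)) (B (m + 1))).comp (LinearMap.range (d (m + 1))).subtype)
        (by
          rintro ⟨c, ⟨a, b⟩, rfl⟩
          exact ⟨a, (congrArg Prod.fst (hd1 a b)).symm⟩)
    have hgsurj : Function.Surjective g := by
      rintro ⟨y, a, ha⟩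
      refine ⟨⟨d (m + 1) (a, (0 : B (m + 2))), ⟨(a, 0), rfl⟩⟩, ?_⟩
      apply Subtype.ext
      simpa [g] using (hdA' (m + 1) a).trans ha
    let e : LinearMap.range (d'' (m + 1)) →ₗ[𝕂] LinearMap.ker g :=
      LinearMap.codRestrict _
        (LinearMap.codRestrict _
          ((LinearMap.inr 𝕂 (A (m + 1)) (B (m + 1))).comp
            (LinearMap.range (d'' (m + 1))).subtype)
          (by
            rintro ⟨y, b, rfl⟩
            exact ⟨(0, b), hdB' (m + 1) b⟩))
        (by
          rintro ⟨y, hy⟩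
          exact Subtype.ext rfl)
    have hebij : Function.Bijective e := by
      constructor
      · rintro ⟨y, hy⟩ ⟨y', hy'⟩ hee
        have := congrArg (fun x => (x.1.1 : A (m + 1) × B (m + 1)).2) hee
        exact Subtype.ext this
      · rintro ⟨⟨c, hc⟩, hx⟩
        have hc1 : c.1 = 0 := congrArg Subtype.val (LinearMap.mem_ker.mp hx)
        obtain ⟨⟨a, b⟩, hab⟩ := hc
        have hda : d' (m + 1) a = 0 := by
          rw [← hdA' (m + 1) a]
          have : (d (m + 1) (a, b)).1 = d' (m + 1) a := congrArg Prod.fst (hd1 a b)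
          rw [hab] at this
          rw [show (d (m + 1) (a, (0 : B (m + 2)))).1 = d' (m + 1) a from hdA' (m + 1) a,
            ← this, hc1]
        obtain ⟨b0, hb0⟩ := hker a hda
        have hc2 : c.2 ∈ LinearMap.range (d'' (m + 1)) := by
          have : c.2 = f a + d'' (m + 1) b := by
            rw [← hab, hd1]
          exact ⟨b0 + b, by rw [map_add, hb0, this]⟩
        refine ⟨⟨c.2, hc2⟩, ?_⟩
        apply Subtype.ext; apply Subtype.ext
        exact Prod.ext hc1.symm rfl
    have hrk := rank_eq_of_bijective_aux _ _ e hebij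
    rw [LinearMap.rank_eq_of_surjective hgsurj, ← hrk]
end
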